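/- If X is an indecomposable non-free totally reflexive module over a local ring (S, 𝔫, ℓ), then the evaluation map θ: X ⊗_S ℓ → Hom_S(X*, ℓ) is the zero map. -/

import Mathlib

open CategoryTheory Opposite TensorProduct

universe u

noncomputable section

/-- `Ext^i_R(M, N) = 0`. -/
def ExtVanishes (R : Type u) [CommRing R] (M N : ModuleCat.{u} R) (i : ℕ) : Prop :=
  Subsingleton (((Ext R (ModuleCat.{u} R) i).obj (op M)).obj N)

/-- `Tor_i^R(M, N) = 0`. -/
def TorVanishes (R : Type u) [CommRing R] (M N : ModuleCat.{u} R) (i : ℕ) : Prop :=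
  Subsingleton (((Tor (ModuleCat.{u} R) i).obj M).obj N)

/-- `G` is totally reflexive: it is the cokernel of a differential in an exact complex `F`
of finitely generated free modules such that `Hom_R(F, R)` is also exact. -/
def IsTotallyReflexive (R : Type u) [CommRing R] (G : ModuleCat.{u} R) : Prop :=
  ∃ (F : ℤ → ModuleCat.{u} R) (d : ∀ i : ℤ, F (i + 1) ⟶ F i),
    (∀ i, Module.Free R (F i)) ∧ (∀ i, Module.Finite R (F i)) ∧
    (∀ i, LinearMap.range (d (i + 1)).hom = LinearMap.ker (d i).hom) ∧
    (∀ i, LinearMap.range (LinearMap.dualMap (d i).hom) =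
      LinearMap.ker (LinearMap.dualMap (d (i + 1)).hom)) ∧
    Nonempty (G ≃ₗ[R] (↥(F 0) ⧸ LinearMap.range (d 0).hom))

/-- `M` is an indecomposable module. -/
def IsIndecomposable (R : Type u) [CommRing R] (M : ModuleCat.{u} R) : Prop :=
  Nontrivial M ∧ ∀ Z W : Submodule R M, IsCompl Z W → Z = ⊥ ∨ W = ⊥

/-- The natural evaluation map `θ : X ⊗ N → Hom(X*, N)`, `x ⊗ n ↦ (ζ ↦ ζ x • n)`. -/
def theta (S : Type u) [CommRing S] (X N : Type u) [AddCommGroup X] [Module S X]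
    [AddCommGroup N] [Module S N] :
    (X ⊗[S] N) →ₗ[S] (Module.Dual S X →ₗ[S] N) :=
  (dualTensorHom S (Module.Dual S X) N).comp ((Module.Dual.eval S X).rTensor N)

/-- If `X` is an indecomposable non-free totally reflexive module over a local ring
`(S, 𝔫, ℓ)`, then the evaluation map `θ : X ⊗ ℓ → Hom(X*, ℓ)` is zero. -/
theorem theta_eq_zero_of_indecomposable_nonfree
    (S : Type u) [CommRing S] [IsLocalRing S] [IsNoetherianRing S]
    (X : ModuleCat.{u} S) (hX : IsTotallyReflexive S X)
    (hind : IsIndecomposable S X) (hnf : ¬ Module.Free S X) :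
    theta S ↥X (IsLocalRing.ResidueField S) = 0 := by
  have key : ∀ (ζ : Module.Dual S X) (x : X), ζ x ∈ IsLocalRing.maximalIdeal S := by
    intro ζ x
    by_contra h
    have hu : IsUnit (ζ x) := by
      by_contra h'
      exact h h'
    let s : S →ₗ[S] X := LinearMap.toSpanSingleton S X (((hu.unit⁻¹ : Sˣ) : S) • x)
    have hs : ∀ r, ζ (s r) = r := by
      intro r
      simp only [s, LinearMap.toSpanSingleton_apply, map_smul, smul_eq_mul, smul_smul]
      have h1 : ((hu.unit⁻¹ : Sˣ) : S) * ζ x = 1 := hu.val_inv_mul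
      rw [mul_assoc, h1, mul_one]
    let p : X →ₗ[S] X := s ∘ₗ ζ
    have hp : ∀ y, p (p y) = p y := by
      intro y
      simp only [p, LinearMap.comp_apply, hs]
    have hcompl : IsCompl (LinearMap.ker p) (LinearMap.range p) := by
      constructor
      · rw [Submodule.disjoint_def]
        rintro y hy ⟨z, rfl⟩
        rw [LinearMap.mem_ker] at hy
        rw [← hp z, hy]
      · rw [codisjoint_iff_le_sup]
        intro y _
        have hy : y = (y - p y) + p y := by abel
        rw [hy]
        exact Submodule.add_mem_sup (by simp [LinearMap.mem_ker, map_sub, hp]) ⟨y, rfl⟩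
    rcases hind.2 _ _ hcompl with h1 | h2
    · apply hnf
      have hinj : Function.Injective ζ := by
        intro a b hab
        have : a - b ∈ LinearMap.ker p := by
          simp [p, LinearMap.mem_ker, map_sub, hab]
        rw [h1, Submodule.mem_bot] at this
        exact sub_eq_zero.mp this
      have hsurj : Function.Surjective ζ := fun r => ⟨s r, hs r⟩
      exact Module.Free.of_equiv (LinearEquiv.ofBijective ζ ⟨hinj, hsurj⟩).symm
    · have hmem : p (s 1) ∈ LinearMap.range p := ⟨s 1, rfl⟩
      rw [h2, Submodule.mem_bot] at hmem
      have hps : p (s 1) = s 1 := by simp only [p, LinearMap.comp_apply, hs]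
      have : (1 : S) = 0 := by rw [← hs 1, ← hps, hmem, map_zero]
      exact one_ne_zero this
  refine TensorProduct.ext' fun x n => ?_
  refine LinearMap.ext fun ζ => ?_
  have h0 : theta S ↥X (IsLocalRing.ResidueField S) (x ⊗ₜ n) ζ = ζ x • n := by
    simp [theta, dualTensorHom_apply]
  rw [h0]
  have h1 : ζ x • n = (IsLocalRing.residue S (ζ x)) * n := by
    rw [Algebra.smul_def]
    rfl
  have h2 : IsLocalRing.residue S (ζ x) = 0 :=
    Ideal.Quotient.eq_zero_iff_mem.mpr (key ζ x)
  rw [h1, h2, zero_mul]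
  simp
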